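/- Let X be a random variable in the class 𝒟 with distribution function F and quantile function Q, and for v ∈ (0,1) let X*_v be the random variable with distribution function F*_v(x) = Q(vx)/Q(v), 0 < x < 1. Then X*_v ≤_st X*_w for all 0 < v < w < 1 if, and only if, the function x ↦ x·τ(x) is decreasing on (0, +∞), where τ(x) = (d/dx) log F(x) is the reversed hazard rate function of X. -/

import Mathlib

open MeasureTheory Set Filter

noncomputable section

variable {Ω : Type*} [MeasurableSpace Ω]

/-- Cumulative distribution function of the random variable `X` under `ℙ`. -/
def distFun (ℙ : Measure Ω) (X : Ω → ℝ) (x : ℝ) : ℝ :=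
  (ℙ {ω | X ω ≤ x}).toReal

/-- Survival (complementary distribution) function of `X` under `ℙ`. -/
def survFun (ℙ : Measure Ω) (X : Ω → ℝ) (x : ℝ) : ℝ :=
  (ℙ {ω | x < X ω}).toReal

/-- Quantile function `Q(u) = inf {x : ℝ | F(x) ≥ u}`. -/
def quantileFun (ℙ : Measure Ω) (X : Ω → ℝ) (u : ℝ) : ℝ :=
  sInf {x : ℝ | u ≤ distFun ℙ X x}

/-- Quantile density function `q(u) = Q'(u)`. -/
def quantileDens (ℙ : Measure Ω) (X : Ω → ℝ) : ℝ → ℝ :=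
  deriv (quantileFun ℙ X)

/-- The class `𝒟` of absolutely continuous random variables with finite mean whose
quantile function vanishes at `0+` and is differentiable on `(0,1)`.  (As noted in
the paper, such random variables are nonnegative with finite nonzero mean.) -/
structure MemD (ℙ : Measure Ω) (X : Ω → ℝ) : Prop where
  meas : Measurable X
  absCont : ℙ.map X ≪ (volume : Measure ℝ)
  integrable : Integrable X ℙ
  quantile_zero : Tendsto (quantileFun ℙ X) (nhdsWithin 0 (Ioi 0)) (nhds 0)
  diff : ∀ u ∈ Ioo (0:ℝ) 1, DifferentiableAt ℝ (quantileFun ℙ X) u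
  nonneg : ∀ᵐ ω ∂ℙ, 0 ≤ X ω
  mean_pos : 0 < ∫ ω, X ω ∂ℙ

/-- The Lorenz curve `L(p) = (1/E[X]) ∫₀ᵖ Q(u) du` of `X`. -/
def lorenz (ℙ : Measure Ω) (X : Ω → ℝ) (p : ℝ) : ℝ :=
  (∫ ω, X ω ∂ℙ)⁻¹ * ∫ u in (0:ℝ)..p, quantileFun ℙ X u

/-- `Z` takes values in `(0,1)` and has probability density `f` there. -/
def HasDensityOn01 (ℙ : Measure Ω) (Z : Ω → ℝ) (f : ℝ → ℝ) : Prop :=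
  (∀ ω, Z ω ∈ Ioo (0:ℝ) 1) ∧
    ∀ t ∈ Icc (0:ℝ) 1, distFun ℙ Z t = ∫ u in (0:ℝ)..t, f u

/-- Conditional value-at-risk `CVaR[X;p] = (1/(1-p)) ∫_p¹ (Q(t) - Q(p)) dt`. -/
def cvar (ℙ : Measure Ω) (X : Ω → ℝ) (p : ℝ) : ℝ :=
  (1 - p)⁻¹ * ∫ t in p..(1:ℝ), (quantileFun ℙ X t - quantileFun ℙ X p)

/-- Average value-at-risk `AVaR[X;v] = (1/v) ∫₀ᵛ Q(u) du`. -/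
def avar (ℙ : Measure Ω) (X : Ω → ℝ) (v : ℝ) : ℝ :=
  v⁻¹ * ∫ u in (0:ℝ)..v, quantileFun ℙ X u

/-- Generalized binomial coefficient `C(α,k) = α(α-1)⋯(α-k+1)/k!`. -/
def genBinom (α : ℝ) (k : ℕ) : ℝ :=
  (∏ i ∈ Finset.range k, (α - (i : ℝ))) / (Nat.factorial k : ℝ)

open scoped Topology

variable {ℙ : Measure Ω} [IsProbabilityMeasure ℙ] {X : Ω → ℝ}

lemma distFun_eq_cdf (hm : Measurable X) (x : ℝ) :
    distFun ℙ X x = ProbabilityTheory.cdf (ℙ.map X) x := by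
  have : IsProbabilityMeasure (ℙ.map X) := Measure.isProbabilityMeasure_map hm.aemeasurable
  rw [ProbabilityTheory.cdf_eq_real, measureReal_def, Measure.map_apply hm measurableSet_Iic]
  rfl

lemma continuous_distFun (hm : Measurable X) (hac : ℙ.map X ≪ (volume : Measure ℝ)) :
    Continuous (distFun ℙ X) := by
  have : IsProbabilityMeasure (ℙ.map X) := Measure.isProbabilityMeasure_map hm.aemeasurable
  have hcong : distFun ℙ X = ProbabilityTheory.cdf (ℙ.map X) := funext fun x => distFun_eq_cdf hm x
  rw [hcong]
  set f := ProbabilityTheory.cdf (ℙ.map X) with hf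
  have hsing : ∀ a : ℝ, (ℙ.map X) {a} = 0 := fun a => hac (Real.volume_singleton)
  have hll : ∀ a : ℝ, Function.leftLim f a = f a := by
    intro a
    have h1 : f.measure {a} = ENNReal.ofReal (f a - Function.leftLim f a) :=
      f.measure_singleton a
    have h2 : f.measure = ℙ.map X := ProbabilityTheory.measure_cdf (ℙ.map X)
    rw [h2, hsing a] at h1
    have h3 : f a - Function.leftLim f a ≤ 0 := by
      by_contra h
      push_neg at h
      rw [eq_comm, ENNReal.ofReal_eq_zero] at h1
      linarith
    have h4 : Function.leftLim f a ≤ f a := f.mono.leftLim_le le_rfl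
    linarith
  rw [continuous_iff_continuousAt]
  intro a
  rw [continuousAt_iff_continuous_left_right]
  constructor
  · rw [← continuousWithinAt_Iio_iff_Iic]
    have := f.mono.tendsto_leftLim a
    rw [hll a] at this
    exact this
  · exact f.right_continuous a

lemma tendsto_distFun_atTop (hm : Measurable X) :
    Tendsto (distFun ℙ X) atTop (𝓝 1) := by
  have : IsProbabilityMeasure (ℙ.map X) := Measure.isProbabilityMeasure_map hm.aemeasurable
  have hcong : distFun ℙ X = ProbabilityTheory.cdf (ℙ.map X) := funext fun x => distFun_eq_cdf hm x
  rw [hcong]; exact ProbabilityTheory.tendsto_cdf_atTop _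

lemma tendsto_distFun_atBot (hm : Measurable X) :
    Tendsto (distFun ℙ X) atBot (𝓝 0) := by
  have : IsProbabilityMeasure (ℙ.map X) := Measure.isProbabilityMeasure_map hm.aemeasurable
  have hcong : distFun ℙ X = ProbabilityTheory.cdf (ℙ.map X) := funext fun x => distFun_eq_cdf hm x
  rw [hcong]; exact ProbabilityTheory.tendsto_cdf_atBot _

lemma mono_distFun : Monotone (distFun ℙ X) := by
  intro a b hab
  exact ENNReal.toReal_mono (measure_ne_top _ _) (measure_mono fun ω h => le_trans h hab)

lemma distFun_le_one (x : ℝ) : distFun ℙ X x ≤ 1 := by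
  rw [show (1:ℝ) = (ℙ univ).toReal by simp]
  exact ENNReal.toReal_mono (measure_ne_top _ _) (measure_mono (subset_univ _))

lemma distFun_nonneg (x : ℝ) : 0 ≤ distFun ℙ X x := ENNReal.toReal_nonneg

lemma quantile_set_nonempty (hm : Measurable X) {u : ℝ} (hu1 : u < 1) :
    {x : ℝ | u ≤ distFun ℙ X x}.Nonempty := by
  have h := tendsto_distFun_atTop hm (ℙ := ℙ)
  exact (h.eventually_const_le hu1).exists

lemma quantile_set_bddBelow (hm : Measurable X) {u : ℝ} (hu0 : (0:ℝ) < u) :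
    BddBelow {x : ℝ | u ≤ distFun ℙ X x} := by
  have h := tendsto_distFun_atBot hm (ℙ := ℙ)
  obtain ⟨x0, hx0⟩ := eventually_atBot.mp (h.eventually_lt_const hu0)
  refine ⟨x0, fun y hy => ?_⟩
  by_contra hlt
  push_neg at hlt
  exact absurd hy (not_le.mpr (hx0 y hlt.le))

lemma distFun_quantile (hm : Measurable X) (hac : ℙ.map X ≪ (volume : Measure ℝ))
    {u : ℝ} (hu : u ∈ Ioo (0:ℝ) 1) :
    distFun ℙ X (quantileFun ℙ X u) = u := by
  set S := {x : ℝ | u ≤ distFun ℙ X x} with hS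
  have hne : S.Nonempty := quantile_set_nonempty hm hu.2
  have hbd : BddBelow S := quantile_set_bddBelow hm hu.1
  have hQ : quantileFun ℙ X u = sInf S := rfl
  have hcont := continuous_distFun hm hac
  have hclosed : IsClosed S := isClosed_le continuous_const hcont
  have hmem : sInf S ∈ S := hclosed.csInf_mem hne hbd
  have hge : u ≤ distFun ℙ X (sInf S) := hmem
  rcases lt_or_eq_of_le hge with hlt | heq
  · exfalso
    have h1 : ∀ᶠ x in 𝓝 (sInf S), u < distFun ℙ X x :=
      (hcont.continuousAt (x := sInf S)).eventually_const_lt hlt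
    have h2 : ∀ᶠ x in 𝓝[<] (sInf S), u < distFun ℙ X x := h1.filter_mono nhdsWithin_le_nhds
    have h3 : ∀ᶠ x in 𝓝[<] (sInf S), x ∈ S := h2.mono fun x hx => le_of_lt hx
    obtain ⟨x, hxS, hxlt⟩ := (h3.and self_mem_nhdsWithin).exists
    exact absurd (csInf_le hbd hxS) (not_le.mpr hxlt)
  · rw [hQ, ← heq]

lemma quantile_mono (hm : Measurable X) :
    ∀ ⦃u v : ℝ⦄, 0 < u → u ≤ v → v < 1 → quantileFun ℙ X u ≤ quantileFun ℙ X v := by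
  intro u v hu0 huv hv1
  apply csInf_le_csInf (quantile_set_bddBelow (ℙ := ℙ) hm hu0) (quantile_set_nonempty (ℙ := ℙ) hm hv1)
  intro x hx
  exact le_trans huv hx

lemma quantile_strictMono (hm : Measurable X) (hac : ℙ.map X ≪ (volume : Measure ℝ)) :
    ∀ ⦃u v : ℝ⦄, u ∈ Ioo (0:ℝ) 1 → v ∈ Ioo (0:ℝ) 1 → u < v →
      quantileFun ℙ X u < quantileFun ℙ X v := by
  intro u v hu hv huv
  rcases lt_or_eq_of_le (quantile_mono (ℙ := ℙ) hm hu.1 huv.le hv.2) with h | h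
  · exact h
  · exfalso
    have h1 := distFun_quantile hm hac hu
    have h2 := distFun_quantile hm hac hv
    rw [h] at h1
    rw [h1] at h2
    exact absurd h2 huv.ne

lemma quantile_nonneg (hX : MemD ℙ X) {u : ℝ} (hu : u ∈ Ioo (0:ℝ) 1) :
    0 ≤ quantileFun ℙ X u := by
  refine le_of_tendsto hX.quantile_zero ?_
  filter_upwards [Ioo_mem_nhdsGT_of_mem (α := ℝ) ⟨le_rfl, hu.1⟩] with t ht
  exact quantile_mono (ℙ := ℙ) hX.meas ht.1 ht.2.le hu.2

lemma quantile_pos (hX : MemD ℙ X) {u : ℝ} (hu : u ∈ Ioo (0:ℝ) 1) :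
    0 < quantileFun ℙ X u := by
  have h1 : quantileFun ℙ X (u/2) < quantileFun ℙ X u :=
    quantile_strictMono hX.meas hX.absCont ⟨by linarith [hu.1], by linarith [hu.2]⟩ hu
      (by linarith [hu.1])
  have h2 : 0 ≤ quantileFun ℙ X (u/2) :=
    quantile_nonneg hX ⟨by linarith [hu.1], by linarith [hu.2]⟩
  linarith

lemma distFun_pos (hX : MemD ℙ X) {x : ℝ} (hx : 0 < x) : 0 < distFun ℙ X x := by
  have h1 : ∀ᶠ u in 𝓝[>] (0:ℝ), quantileFun ℙ X u < x :=
    hX.quantile_zero.eventually_lt_const hx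
  have h2 : Ioo (0:ℝ) 1 ∈ 𝓝[>] (0:ℝ) := Ioo_mem_nhdsGT_of_mem ⟨le_rfl, one_pos⟩
  obtain ⟨u, hu1, hu2⟩ := (h1.and (eventually_of_mem h2 fun t ht => ht)).exists
  calc (0:ℝ) < u := hu2.1
  _ = distFun ℙ X (quantileFun ℙ X u) := (distFun_quantile hX.meas hX.absCont hu2).symm
  _ ≤ distFun ℙ X x := mono_distFun hu1.le

lemma quantile_continuousAt (hX : MemD ℙ X) {u : ℝ} (hu : u ∈ Ioo (0:ℝ) 1) :
    ContinuousAt (quantileFun ℙ X) u := (hX.diff u hu).continuousAt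

lemma image_mem_nhds (hX : MemD ℙ X) {u : ℝ} (hu : u ∈ Ioo (0:ℝ) 1) :
    quantileFun ℙ X '' (Ioo 0 1) ∈ 𝓝 (quantileFun ℙ X u) := by
  obtain ⟨hu0, hu1⟩ := hu
  have ha : u/2 ∈ Ioo (0:ℝ) 1 := ⟨by linarith, by linarith⟩
  have hb : (u+1)/2 ∈ Ioo (0:ℝ) 1 := ⟨by linarith, by linarith⟩
  have hab : u/2 < (u+1)/2 := by linarith
  have hsub : Icc (u/2) ((u+1)/2) ⊆ Ioo (0:ℝ) 1 := fun t ht => ⟨lt_of_lt_of_le ha.1 ht.1,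
    lt_of_le_of_lt ht.2 hb.2⟩
  have hcont : ContinuousOn (quantileFun ℙ X) (Icc (u/2) ((u+1)/2)) := fun t ht =>
    (quantile_continuousAt hX (hsub ht)).continuousWithinAt
  have hIVT := intermediate_value_Ioo hab.le hcont
  have h1 : quantileFun ℙ X (u/2) < quantileFun ℙ X u :=
    quantile_strictMono hX.meas hX.absCont ha ⟨hu0, hu1⟩ (by linarith)
  have h2 : quantileFun ℙ X u < quantileFun ℙ X ((u+1)/2) :=
    quantile_strictMono hX.meas hX.absCont ⟨hu0, hu1⟩ hb (by linarith)
  refine mem_of_superset (Ioo_mem_nhds h1 h2) ?_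
  refine subset_trans hIVT (image_mono ?_)
  intro t ht
  exact ⟨lt_of_le_of_lt ha.1.le ht.1, lt_of_lt_of_le ht.2 hb.2.le⟩

lemma quantile_leftInv (hX : MemD ℙ X) {y : ℝ}
    (hy : y ∈ quantileFun ℙ X '' (Ioo 0 1)) :
    quantileFun ℙ X (distFun ℙ X y) = y := by
  obtain ⟨u, hu, rfl⟩ := hy
  rw [distFun_quantile hX.meas hX.absCont hu]

lemma eventually_leftInv (hX : MemD ℙ X) {u : ℝ} (hu : u ∈ Ioo (0:ℝ) 1) :
    ∀ᶠ y in 𝓝 (quantileFun ℙ X u), quantileFun ℙ X (distFun ℙ X y) = y := by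
  filter_upwards [image_mem_nhds hX hu] with y hy
  exact quantile_leftInv hX hy

lemma mem_image_of_lt_one (hX : MemD ℙ X) {x : ℝ} (hx : 0 < x)
    (hFx : distFun ℙ X x < 1) : x ∈ quantileFun ℙ X '' (Ioo 0 1) := by
  -- a point below x
  have h1 : ∀ᶠ u in 𝓝[>] (0:ℝ), quantileFun ℙ X u < x :=
    hX.quantile_zero.eventually_lt_const hx
  have h2 : Ioo (0:ℝ) 1 ∈ 𝓝[>] (0:ℝ) := Ioo_mem_nhdsGT_of_mem ⟨le_rfl, one_pos⟩
  obtain ⟨u1, hu1lt, hu1⟩ := (h1.and (eventually_of_mem h2 fun t ht => ht)).exists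
  -- points above x
  have hFx0 : 0 < distFun ℙ X x := distFun_pos hX hx
  have hx_le : ∀ t : ℝ, distFun ℙ X x < t → t < 1 → x ≤ quantileFun ℙ X t := by
    intro t h1t h2t
    refine le_csInf (quantile_set_nonempty hX.meas h2t) fun y hy => ?_
    by_contra hlt
    push_neg at hlt
    have : distFun ℙ X y ≤ distFun ℙ X x := mono_distFun hlt.le
    have : t ≤ distFun ℙ X x := le_trans hy this
    linarith
  have hFle : distFun ℙ X x ≤ 1 := distFun_le_one (ℙ := ℙ) (X := X) x
  obtain ⟨F0, hF0eq⟩ : ∃ F0 : ℝ, F0 = distFun ℙ X x := ⟨_, rfl⟩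
  rw [← hF0eq] at hFx hFx0 hx_le hFle
  have ht1 : (F0 + 1)/2 ∈ Ioo (0:ℝ) 1 := ⟨by linarith, by linarith⟩
  have ht2 : ((F0+1)/2 + 1)/2 ∈ Ioo (0:ℝ) 1 := ⟨by linarith, by linarith⟩
  have hxt1 : x ≤ quantileFun ℙ X ((F0 + 1)/2) := hx_le _ (by linarith) ht1.2
  have hxt2 : x < quantileFun ℙ X (((F0+1)/2 + 1)/2) :=
    lt_of_le_of_lt hxt1 (quantile_strictMono hX.meas hX.absCont ht1 ht2
      (by linarith))
  have hu1t2 : u1 < ((F0+1)/2 + 1)/2 := by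
    by_contra hc
    push_neg at hc
    have := quantile_mono (ℙ := ℙ) hX.meas ht2.1 hc hu1.2
    linarith
  have hsub : Icc u1 (((F0+1)/2 + 1)/2) ⊆ Ioo (0:ℝ) 1 := fun s hs =>
    ⟨lt_of_lt_of_le hu1.1 hs.1, lt_of_le_of_lt hs.2 ht2.2⟩
  have hcont : ContinuousOn (quantileFun ℙ X) (Icc u1 (((F0+1)/2 + 1)/2)) := fun s hs =>
    (quantile_continuousAt hX (hsub hs)).continuousWithinAt
  have hIVT := intermediate_value_Ioo hu1t2.le hcont
  have hmem : x ∈ Ioo (quantileFun ℙ X u1) (quantileFun ℙ X (((F0+1)/2 + 1)/2)) :=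
    ⟨hu1lt, hxt2⟩
  exact (image_mono (f := quantileFun ℙ X) (fun s hs => hsub ⟨hs.1.le, hs.2.le⟩)) (hIVT hmem)

lemma hasDerivAt_quantile (hX : MemD ℙ X) {u : ℝ} (hu : u ∈ Ioo (0:ℝ) 1) :
    HasDerivAt (quantileFun ℙ X) (quantileDens ℙ X u) u := (hX.diff u hu).hasDerivAt

lemma quantileDens_nonneg (hX : MemD ℙ X) {u : ℝ} (hu : u ∈ Ioo (0:ℝ) 1) :
    0 ≤ quantileDens ℙ X u := by
  have h := hasDerivAt_iff_tendsto_slope.mp (hasDerivAt_quantile hX hu)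
  have h2 : Tendsto (slope (quantileFun ℙ X) u) (𝓝[>] u) (𝓝 (quantileDens ℙ X u)) :=
    h.mono_left (nhdsWithin_mono u fun x hx => ne_of_gt hx)
  refine ge_of_tendsto h2 ?_
  filter_upwards [Ioo_mem_nhdsGT_of_mem (α := ℝ) ⟨le_rfl, hu.2⟩] with t ht
  rw [slope_def_field]
  rw [div_eq_mul_inv]
  apply mul_nonneg
  · have := quantile_mono (ℙ := ℙ) hX.meas hu.1 ht.1.le ht.2
    linarith
  · have : (0:ℝ) < t - u := by linarith [ht.1]
    positivity

lemma exists_quantileDens_pos (hX : MemD ℙ X) {a b : ℝ} (ha : 0 < a) (hab : a < b)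
    (hb : b < 1) : ∃ ξ ∈ Ioo a b, 0 < quantileDens ℙ X ξ := by
  have hsub : Icc a b ⊆ Ioo (0:ℝ) 1 := fun t ht =>
    ⟨lt_of_lt_of_le ha ht.1, lt_of_le_of_lt ht.2 hb⟩
  have hcont : ContinuousOn (quantileFun ℙ X) (Icc a b) := fun t ht =>
    (quantile_continuousAt hX (hsub ht)).continuousWithinAt
  have hder : ∀ x ∈ Ioo a b, HasDerivAt (quantileFun ℙ X) (quantileDens ℙ X x) x :=
    fun x hx => hasDerivAt_quantile hX (hsub ⟨hx.1.le, hx.2.le⟩)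
  obtain ⟨ξ, hξ, hξeq⟩ := exists_hasDerivAt_eq_slope _ _ hab hcont hder
  refine ⟨ξ, hξ, ?_⟩
  rw [hξeq]
  have hlt : quantileFun ℙ X a < quantileFun ℙ X b :=
    quantile_strictMono hX.meas hX.absCont ⟨ha, lt_trans hab hb⟩
      ⟨lt_trans ha hab, hb⟩ hab
  have : (0:ℝ) < b - a := by linarith
  apply div_pos (by linarith) this

lemma hasDerivAt_distFun (hX : MemD ℙ X) {u : ℝ} (hu : u ∈ Ioo (0:ℝ) 1)
    (hq : quantileDens ℙ X u ≠ 0) :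
    HasDerivAt (distFun ℙ X) (quantileDens ℙ X u)⁻¹ (quantileFun ℙ X u) := by
  have hF : distFun ℙ X (quantileFun ℙ X u) = u := distFun_quantile hX.meas hX.absCont hu
  have hQ : HasDerivAt (quantileFun ℙ X) (quantileDens ℙ X u)
      (distFun ℙ X (quantileFun ℙ X u)) := by rw [hF]; exact hasDerivAt_quantile hX hu
  exact HasDerivAt.of_local_left_inverse
    ((continuous_distFun hX.meas hX.absCont).continuousAt) hQ hq (eventually_leftInv hX hu)

lemma hasDerivAt_logF (hX : MemD ℙ X) {u : ℝ} (hu : u ∈ Ioo (0:ℝ) 1)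
    (hq : quantileDens ℙ X u ≠ 0) :
    HasDerivAt (fun y => Real.log (distFun ℙ X y)) (u⁻¹ * (quantileDens ℙ X u)⁻¹)
      (quantileFun ℙ X u) := by
  have hF : distFun ℙ X (quantileFun ℙ X u) = u := distFun_quantile hX.meas hX.absCont hu
  have hlog : HasDerivAt Real.log (distFun ℙ X (quantileFun ℙ X u))⁻¹
      (distFun ℙ X (quantileFun ℙ X u)) := Real.hasDerivAt_log (by rw [hF]; exact ne_of_gt hu.1)
  have := hlog.comp (quantileFun ℙ X u) (hasDerivAt_distFun hX hu hq)
  rw [hF] at this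
  exact this

lemma T_eq (hX : MemD ℙ X) {u : ℝ} (hu : u ∈ Ioo (0:ℝ) 1)
    (hq : quantileDens ℙ X u ≠ 0) :
    quantileFun ℙ X u * deriv (fun y => Real.log (distFun ℙ X y)) (quantileFun ℙ X u)
      = quantileFun ℙ X u / (u * quantileDens ℙ X u) := by
  rw [(hasDerivAt_logF hX hu hq).deriv]
  field_simp

lemma not_differentiableAt_logF (hX : MemD ℙ X) {u : ℝ} (hu : u ∈ Ioo (0:ℝ) 1)
    (hq : quantileDens ℙ X u = 0) :
    ¬ DifferentiableAt ℝ (fun y => Real.log (distFun ℙ X y)) (quantileFun ℙ X u) := by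
  intro hdiff
  have hx0 : 0 < quantileFun ℙ X u := quantile_pos hX hu
  -- F is positive in a neighborhood
  have hFpos : ∀ᶠ y in 𝓝 (quantileFun ℙ X u), 0 < distFun ℙ X y := by
    filter_upwards [eventually_gt_nhds hx0] with y hy
    exact distFun_pos hX hy
  -- F = exp (log F) near, hence F differentiable
  have hFeq : (fun y => Real.exp (Real.log (distFun ℙ X y))) =ᶠ[𝓝 (quantileFun ℙ X u)]
      distFun ℙ X := by
    filter_upwards [hFpos] with y hy
    exact Real.exp_log hy
  have hFdiff : DifferentiableAt ℝ (distFun ℙ X) (quantileFun ℙ X u) := by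
    have : DifferentiableAt ℝ (fun y => Real.exp (Real.log (distFun ℙ X y)))
        (quantileFun ℙ X u) := (Real.differentiable_exp _).comp _ hdiff
    exact this.congr_of_eventuallyEq hFeq.symm
  -- contradiction via local left inverse with zero derivative
  have hF : distFun ℙ X (quantileFun ℙ X u) = u := distFun_quantile hX.meas hX.absCont hu
  have hQ0 : HasDerivAt (quantileFun ℙ X) 0 (distFun ℙ X (quantileFun ℙ X u)) := by
    rw [hF]
    have := hasDerivAt_quantile hX hu
    rwa [hq] at this
  have hfg : quantileFun ℙ X ∘ distFun ℙ X =ᶠ[𝓝 (quantileFun ℙ X u)] id := by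
    filter_upwards [image_mem_nhds hX hu] with y hy
    exact quantile_leftInv hX hy
  exact not_differentiableAt_of_local_left_inverse_hasDerivAt_zero hQ0 hfg hFdiff

lemma hasDerivAt_psi (hX : MemD ℙ X) {x t : ℝ} (hx : x ∈ Ioo (0:ℝ) 1)
    (ht : t ∈ Ioo (0:ℝ) 1) :
    HasDerivAt (fun v => Real.log (quantileFun ℙ X (v * x)) - Real.log (quantileFun ℙ X v))
      ((quantileFun ℙ X (t*x))⁻¹ * (quantileDens ℙ X (t*x) * x)
        - (quantileFun ℙ X t)⁻¹ * quantileDens ℙ X t) t := by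
  have htx : t * x ∈ Ioo (0:ℝ) 1 := ⟨mul_pos ht.1 hx.1, by nlinarith [ht.1, ht.2, hx.1, hx.2]⟩
  have inner : HasDerivAt (fun v : ℝ => v * x) x t := hasDerivAt_mul_const x
  have comp : HasDerivAt (fun v => quantileFun ℙ X (v * x)) (quantileDens ℙ X (t*x) * x) t :=
    HasDerivAt.comp (h₂ := quantileFun ℙ X) (h := fun v : ℝ => v * x) t (hasDerivAt_quantile hX htx) inner
  have hlog1 : HasDerivAt (fun v => Real.log (quantileFun ℙ X (v * x)))
      ((quantileFun ℙ X (t*x))⁻¹ * (quantileDens ℙ X (t*x) * x)) t :=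
    HasDerivAt.comp (h₂ := Real.log) t (Real.hasDerivAt_log (quantile_pos hX htx).ne') comp
  have hlog2 : HasDerivAt (fun v => Real.log (quantileFun ℙ X v))
      ((quantileFun ℙ X t)⁻¹ * quantileDens ℙ X t) t :=
    (Real.hasDerivAt_log (quantile_pos hX ht).ne').comp t (hasDerivAt_quantile hX ht)
  exact hlog1.sub hlog2

lemma deriv_nonpos_of_antitoneOn {f : ℝ → ℝ} {f' a b x : ℝ}
    (hf : AntitoneOn f (Ioo a b)) (hx : x ∈ Ioo a b) (hd : HasDerivAt f f' x) : f' ≤ 0 := by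
  have h := hasDerivAt_iff_tendsto_slope.mp hd
  have h2 : Tendsto (slope f x) (𝓝[>] x) (𝓝 f') :=
    h.mono_left (nhdsWithin_mono x fun y hy => ne_of_gt hy)
  refine le_of_tendsto h2 ?_
  filter_upwards [Ioo_mem_nhdsGT_of_mem (α := ℝ) ⟨le_rfl, hx.2⟩] with t ht
  rw [slope_def_field]
  have hmem : t ∈ Ioo a b := ⟨lt_trans hx.1 ht.1, ht.2⟩
  have hle : f t ≤ f x := hf hx hmem ht.1.le
  have : (0:ℝ) < t - x := by linarith [ht.1]
  apply div_nonpos_of_nonpos_of_nonneg (by linarith) this.le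

/-- The function `g u = u * q u / Q u`. -/
def gfun (ℙ : Measure Ω) (X : Ω → ℝ) (u : ℝ) : ℝ :=
  u * quantileDens ℙ X u / quantileFun ℙ X u

lemma gmono_of_st (hX : MemD ℙ X)
    (hst : ∀ v w : ℝ, 0 < v → v < w → w < 1 →
      ∀ x ∈ Ioo (0:ℝ) 1,
        quantileFun ℙ X (w * x) / quantileFun ℙ X w
          ≤ quantileFun ℙ X (v * x) / quantileFun ℙ X v) :
    ∀ ⦃u1 u2 : ℝ⦄, u1 ∈ Ioo (0:ℝ) 1 → u2 ∈ Ioo (0:ℝ) 1 → u1 < u2 →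
      gfun ℙ X u1 ≤ gfun ℙ X u2 := by
  intro u1 u2 hu1 hu2 h12
  have hr : u1 / u2 ∈ Ioo (0:ℝ) 1 := ⟨div_pos hu1.1 hu2.1, (div_lt_one hu2.1).mpr h12⟩
  -- ψ is antitone on Ioo 0 1
  have hanti : AntitoneOn (fun v => Real.log (quantileFun ℙ X (v * (u1/u2)))
      - Real.log (quantileFun ℙ X v)) (Ioo (0:ℝ) 1) := by
    intro v hv w hw hvw
    rcases eq_or_lt_of_le hvw with rfl | hlt
    · exact le_rfl
    have hkey := hst v w hv.1 hlt hw.2 (u1/u2) hr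
    have hvr : v * (u1/u2) ∈ Ioo (0:ℝ) 1 :=
      ⟨mul_pos hv.1 hr.1, by nlinarith [hv.1, hv.2, hr.1, hr.2]⟩
    have hwr : w * (u1/u2) ∈ Ioo (0:ℝ) 1 :=
      ⟨mul_pos hw.1 hr.1, by nlinarith [hw.1, hw.2, hr.1, hr.2]⟩
    have p1 := quantile_pos hX hvr
    have p2 := quantile_pos hX hv
    have p3 := quantile_pos hX hwr
    have p4 := quantile_pos hX hw
    have hlog := Real.log_le_log (div_pos p3 p4) hkey
    rw [Real.log_div p3.ne' p4.ne', Real.log_div p1.ne' p2.ne'] at hlog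
    exact hlog
  have hd := hasDerivAt_psi hX hr hu2
  have hle := deriv_nonpos_of_antitoneOn hanti hu2 hd
  -- algebra
  have hru : u2 * (u1/u2) = u1 := by rw [mul_comm]; exact div_mul_cancel₀ u1 hu2.1.ne'
  rw [hru] at hd
  have hru' : u2 * (u1/u2) = u1 := hru
  have p1 := quantile_pos hX hu1
  have p2 := quantile_pos hX hu2
  have hq1 : u2 * (u1/u2) = u1 := hru
  -- from hle : (Q u1)⁻¹ * (q u1 * (u1/u2)) - (Q u2)⁻¹ * q u2 ≤ 0
  have hle' : (quantileFun ℙ X (u2 * (u1/u2)))⁻¹ * (quantileDens ℙ X (u2 * (u1/u2)) * (u1/u2))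
      - (quantileFun ℙ X u2)⁻¹ * quantileDens ℙ X u2 ≤ 0 := hle
  rw [hq1] at hle'
  unfold gfun
  rw [div_le_div_iff₀ p1 p2]
  have hu2pos := hu2.1
  have h1 : (quantileFun ℙ X u1)⁻¹ * (quantileDens ℙ X u1 * (u1/u2))
      ≤ (quantileFun ℙ X u2)⁻¹ * quantileDens ℙ X u2 := by linarith
  have h2 := mul_le_mul_of_nonneg_left h1 hu2pos.le
  have e1 : u2 * ((quantileFun ℙ X u1)⁻¹ * (quantileDens ℙ X u1 * (u1/u2)))
      = u1 * quantileDens ℙ X u1 / quantileFun ℙ X u1 := by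
    field_simp
  have e2 : u2 * ((quantileFun ℙ X u2)⁻¹ * quantileDens ℙ X u2)
      = u2 * quantileDens ℙ X u2 / quantileFun ℙ X u2 := by
    field_simp
  rw [e1, e2] at h2
  rw [div_le_div_iff₀ p1 p2] at h2
  exact h2

lemma qpos_of_gmono (hX : MemD ℙ X)
    (hg : ∀ ⦃u1 u2 : ℝ⦄, u1 ∈ Ioo (0:ℝ) 1 → u2 ∈ Ioo (0:ℝ) 1 → u1 < u2 →
      gfun ℙ X u1 ≤ gfun ℙ X u2) :
    ∀ ⦃u : ℝ⦄, u ∈ Ioo (0:ℝ) 1 → 0 < quantileDens ℙ X u := by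
  intro u hu
  rcases lt_or_eq_of_le (quantileDens_nonneg hX hu) with h | h
  · exact h
  exfalso
  obtain ⟨ξ, hξ, hξpos⟩ := exists_quantileDens_pos hX (by linarith [hu.1] : (0:ℝ) < u/2)
    (by linarith [hu.1] : u/2 < u) hu.2
  have hξmem : ξ ∈ Ioo (0:ℝ) 1 := ⟨by linarith [hξ.1, hu.1], by linarith [hξ.2, hu.2]⟩
  have hgξ : 0 < gfun ℙ X ξ :=
    div_pos (mul_pos hξmem.1 hξpos) (quantile_pos hX hξmem)
  have hgu : gfun ℙ X u = 0 := by
    unfold gfun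
    rw [← h, mul_zero, zero_div]
  have := hg hξmem hu hξ.2
  rw [hgu] at this
  linarith

lemma st_of_gmono (hX : MemD ℙ X)
    (hg : ∀ ⦃u1 u2 : ℝ⦄, u1 ∈ Ioo (0:ℝ) 1 → u2 ∈ Ioo (0:ℝ) 1 → u1 < u2 →
      gfun ℙ X u1 ≤ gfun ℙ X u2) :
    ∀ v w : ℝ, 0 < v → v < w → w < 1 →
      ∀ x ∈ Ioo (0:ℝ) 1,
        quantileFun ℙ X (w * x) / quantileFun ℙ X w
          ≤ quantileFun ℙ X (v * x) / quantileFun ℙ X v := by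
  intro v w hv hvw hw1 x hx
  have hvm : v ∈ Ioo (0:ℝ) 1 := ⟨hv, by linarith⟩
  have hwm : w ∈ Ioo (0:ℝ) 1 := ⟨by linarith, hw1⟩
  have hIccsub : Icc v w ⊆ Ioo (0:ℝ) 1 := fun t ht => ⟨lt_of_lt_of_le hv ht.1,
    lt_of_le_of_lt ht.2 hw1⟩
  set ψ : ℝ → ℝ := fun t => Real.log (quantileFun ℙ X (t * x))
    - Real.log (quantileFun ℙ X t) with hψ
  have hder : ∀ t ∈ Ioo (0:ℝ) 1, HasDerivAt ψ
      ((quantileFun ℙ X (t*x))⁻¹ * (quantileDens ℙ X (t*x) * x)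
        - (quantileFun ℙ X t)⁻¹ * quantileDens ℙ X t) t := fun t ht =>
    hasDerivAt_psi hX hx ht
  have hanti : AntitoneOn ψ (Icc v w) := by
    apply antitoneOn_of_deriv_nonpos (convex_Icc v w)
    · intro t ht
      exact ((hder t (hIccsub ht)).differentiableAt).continuousAt.continuousWithinAt
    · intro t ht
      rw [interior_Icc] at ht
      exact ((hder t (hIccsub ⟨ht.1.le, ht.2.le⟩)).differentiableAt).differentiableWithinAt
    · intro t ht
      rw [interior_Icc] at ht
      have htm : t ∈ Ioo (0:ℝ) 1 := hIccsub ⟨ht.1.le, ht.2.le⟩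
      rw [(hder t htm).deriv]
      -- use g monotonicity
      have htx : t * x ∈ Ioo (0:ℝ) 1 :=
        ⟨mul_pos htm.1 hx.1, by nlinarith [htm.1, htm.2, hx.1, hx.2]⟩
      have htxlt : t * x < t := by nlinarith [htm.1, hx.2]
      have hgle := hg htx htm htxlt
      unfold gfun at hgle
      rw [div_le_div_iff₀ (quantile_pos hX htx) (quantile_pos hX htm)] at hgle
      have p1 := quantile_pos hX htx
      have p2 := quantile_pos hX htm
      rw [sub_nonpos, inv_mul_le_iff₀ p1]
      have ht0 : 0 < t := htm.1
      have hrw : quantileFun ℙ X (t*x) * ((quantileFun ℙ X t)⁻¹ * quantileDens ℙ X t)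
          = quantileDens ℙ X t * quantileFun ℙ X (t*x) / quantileFun ℙ X t := by
        field_simp
      rw [hrw, le_div_iff₀ p2]
      have hgle' : t * (quantileDens ℙ X (t*x) * x * quantileFun ℙ X t)
          ≤ t * (quantileDens ℙ X t * quantileFun ℙ X (t*x)) := by nlinarith [hgle]
      exact le_of_mul_le_mul_left hgle' ht0

  have hψle : ψ w ≤ ψ v := hanti (left_mem_Icc.mpr hvw.le) (right_mem_Icc.mpr hvw.le) hvw.le
  have hvx : v * x ∈ Ioo (0:ℝ) 1 := ⟨mul_pos hv hx.1, by nlinarith [hvm.2, hx.1, hx.2]⟩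
  have hwx : w * x ∈ Ioo (0:ℝ) 1 := ⟨mul_pos hwm.1 hx.1, by nlinarith [hwm.1, hw1, hx.1, hx.2]⟩
  have p1 := quantile_pos hX hwx
  have p2 := quantile_pos hX hwm
  have p3 := quantile_pos hX hvx
  have p4 := quantile_pos hX hvm
  have := Real.exp_le_exp.mpr hψle
  rw [hψ] at this
  simp only [Real.exp_sub, Real.exp_log p1, Real.exp_log p2, Real.exp_log p3,
    Real.exp_log p4] at this
  exact this

lemma qpos_of_antitoneT (hX : MemD ℙ X)
    (hT : AntitoneOn (fun x => x * deriv (fun y => Real.log (distFun ℙ X y)) x) (Ioi 0)) :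
    ∀ ⦃u : ℝ⦄, u ∈ Ioo (0:ℝ) 1 → 0 < quantileDens ℙ X u := by
  intro u hu
  rcases lt_or_eq_of_le (quantileDens_nonneg hX hu) with h | h
  · exact h
  exfalso
  have hq0 : quantileDens ℙ X u = 0 := h.symm
  have hT0 : quantileFun ℙ X u * deriv (fun y => Real.log (distFun ℙ X y))
      (quantileFun ℙ X u) = 0 := by
    rw [deriv_zero_of_not_differentiableAt (not_differentiableAt_logF hX hu hq0), mul_zero]
  obtain ⟨ξ, hξ, hξpos⟩ := exists_quantileDens_pos hX hu.1
    (by linarith [hu.2] : u < (u+1)/2) (by linarith [hu.2] : (u+1)/2 < 1)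
  have hξmem : ξ ∈ Ioo (0:ℝ) 1 := ⟨lt_trans hu.1 hξ.1, by linarith [hξ.2, hu.2]⟩
  have hTξ : quantileFun ℙ X ξ * deriv (fun y => Real.log (distFun ℙ X y))
      (quantileFun ℙ X ξ) = quantileFun ℙ X ξ / (ξ * quantileDens ℙ X ξ) :=
    T_eq hX hξmem hξpos.ne'
  have hQlt : quantileFun ℙ X u < quantileFun ℙ X ξ :=
    quantile_strictMono hX.meas hX.absCont hu hξmem hξ.1
  have hle := hT (mem_Ioi.mpr (quantile_pos hX hu)) (mem_Ioi.mpr (quantile_pos hX hξmem))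
    hQlt.le
  simp only at hle
  rw [hT0, hTξ] at hle
  have : 0 < quantileFun ℙ X ξ / (ξ * quantileDens ℙ X ξ) :=
    div_pos (quantile_pos hX hξmem) (mul_pos hξmem.1 hξpos)
  linarith

lemma gmono_of_antitoneT (hX : MemD ℙ X)
    (hT : AntitoneOn (fun x => x * deriv (fun y => Real.log (distFun ℙ X y)) x) (Ioi 0)) :
    ∀ ⦃u1 u2 : ℝ⦄, u1 ∈ Ioo (0:ℝ) 1 → u2 ∈ Ioo (0:ℝ) 1 → u1 < u2 →
      gfun ℙ X u1 ≤ gfun ℙ X u2 := by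
  intro u1 u2 hu1 hu2 h12
  have hq1 := qpos_of_antitoneT hX hT hu1
  have hq2 := qpos_of_antitoneT hX hT hu2
  have hQlt : quantileFun ℙ X u1 < quantileFun ℙ X u2 :=
    quantile_strictMono hX.meas hX.absCont hu1 hu2 h12
  have hle := hT (mem_Ioi.mpr (quantile_pos hX hu1)) (mem_Ioi.mpr (quantile_pos hX hu2))
    hQlt.le
  simp only at hle
  rw [T_eq hX hu1 hq1.ne', T_eq hX hu2 hq2.ne'] at hle
  have p1 := quantile_pos hX hu1
  have p2 := quantile_pos hX hu2
  rw [div_le_div_iff₀ (mul_pos hu2.1 hq2) (mul_pos hu1.1 hq1)] at hle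
  unfold gfun
  rw [div_le_div_iff₀ p1 p2]
  nlinarith [hle]

lemma T_nonneg_of_F_eq_one (hx : (0:ℝ) < x) (hF : distFun ℙ X x = 1) :
    0 ≤ x * deriv (fun y => Real.log (distFun ℙ X y)) x := by
  by_cases hdiff : DifferentiableAt ℝ (fun y => Real.log (distFun ℙ X y)) x
  · apply mul_nonneg hx.le
    have hs := hasDerivAt_iff_tendsto_slope.mp hdiff.hasDerivAt
    have h2 : Tendsto (slope (fun y => Real.log (distFun ℙ X y)) x) (𝓝[<] x)
        (𝓝 (deriv (fun y => Real.log (distFun ℙ X y)) x)) :=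
      hs.mono_left (nhdsWithin_mono x fun y hy => ne_of_lt hy)
    refine ge_of_tendsto h2 ?_
    filter_upwards [self_mem_nhdsWithin] with y hy
    rw [slope_def_field]
    have hnum : Real.log (distFun ℙ X y) - Real.log (distFun ℙ X x) ≤ 0 := by
      rw [hF, Real.log_one, sub_zero]
      exact Real.log_nonpos (distFun_nonneg (ℙ := ℙ) (X := X) y)
        (distFun_le_one (ℙ := ℙ) (X := X) y)
    have hden : y - x < 0 := sub_neg.mpr (mem_Iio.mp hy)
    exact div_nonneg_of_nonpos hnum hden.le
  · rw [deriv_zero_of_not_differentiableAt hdiff, mul_zero]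

lemma derivLogF_zero_of_flat {x' x : ℝ} (hx' : 0 < x') (hx'x : x' < x)
    (hF : distFun ℙ X x' = 1) :
    deriv (fun y => Real.log (distFun ℙ X y)) x = 0 := by
  have heq : (fun y => Real.log (distFun ℙ X y)) =ᶠ[𝓝 x] fun _ => (0:ℝ) := by
    filter_upwards [eventually_gt_nhds hx'x] with y hy
    have h1 : distFun ℙ X y = 1 :=
      le_antisymm (distFun_le_one (ℙ := ℙ) (X := X) y) (hF ▸ mono_distFun hy.le)
    rw [h1, Real.log_one]
  rw [heq.deriv_eq, deriv_const]

lemma continuousOn_logF (hX : MemD ℙ X) {a b : ℝ} (ha : 0 < a) :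
    ContinuousOn (fun y => Real.log (distFun ℙ X y)) (Icc a b) := by
  intro t ht
  have htpos : 0 < distFun ℙ X t := distFun_pos hX (lt_of_lt_of_le ha ht.1)
  exact ((Real.continuousAt_log htpos.ne').comp
    ((continuous_distFun hX.meas hX.absCont).continuousAt)).continuousWithinAt

lemma T_boundary_le (hX : MemD ℙ X)
    (hg : ∀ ⦃u1 u2 : ℝ⦄, u1 ∈ Ioo (0:ℝ) 1 → u2 ∈ Ioo (0:ℝ) 1 → u1 < u2 →
      gfun ℙ X u1 ≤ gfun ℙ X u2)
    {x1 x2 : ℝ} (hx1 : 0 < x1) (h12 : x1 < x2) (hflat : ∀ y ∈ Ioo (0:ℝ) x2, distFun ℙ X y < 1) :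
    x2 * deriv (fun y => Real.log (distFun ℙ X y)) x2
      ≤ x1 * deriv (fun y => Real.log (distFun ℙ X y)) x1 := by
  have hqpos := qpos_of_gmono hX hg
  obtain ⟨u1, hu1, hQ1⟩ := mem_image_of_lt_one hX hx1 (hflat x1 ⟨hx1, h12⟩)
  have hq1 : 0 < quantileDens ℙ X u1 := hqpos hu1
  have hC : x1 * deriv (fun y => Real.log (distFun ℙ X y)) x1
      = quantileFun ℙ X u1 / (u1 * quantileDens ℙ X u1) := by
    rw [← hQ1]; exact T_eq hX hu1 hq1.ne'
  set C := quantileFun ℙ X u1 / (u1 * quantileDens ℙ X u1) with hCdef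
  have hCpos : 0 < C := div_pos (quantile_pos hX hu1) (mul_pos hu1.1 hq1)
  rw [hC]
  by_cases hdiff : DifferentiableAt ℝ (fun y => Real.log (distFun ℙ X y)) x2
  · have hs := hasDerivAt_iff_tendsto_slope.mp hdiff.hasDerivAt
    have h2 : Tendsto (slope (fun y => Real.log (distFun ℙ X y)) x2) (𝓝[<] x2)
        (𝓝 (deriv (fun y => Real.log (distFun ℙ X y)) x2)) :=
      hs.mono_left (nhdsWithin_mono x2 fun y hy => ne_of_lt hy)
    have hx2 : (0:ℝ) < x2 := lt_trans hx1 h12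
    have htendC : Tendsto (fun y => C / y) (𝓝[<] x2) (𝓝 (C / x2)) :=
      ((continuousAt_const.div continuousAt_id hx2.ne').tendsto).mono_left nhdsWithin_le_nhds
    have hev : ∀ᶠ y in 𝓝[<] x2,
        slope (fun y => Real.log (distFun ℙ X y)) x2 y ≤ C / y := by
      filter_upwards [Ioo_mem_nhdsLT_of_mem (α := ℝ) ⟨h12, le_rfl⟩] with y hy
      have hy0 : 0 < y := lt_trans hx1 hy.1
      -- MVT on [y, x2]
      have hcont : ContinuousOn (fun z => Real.log (distFun ℙ X z)) (Icc y x2) :=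
        continuousOn_logF hX hy0
      have hdiffOn : DifferentiableOn ℝ (fun z => Real.log (distFun ℙ X z)) (Ioo y x2) := by
        intro t ht
        have ht0 : 0 < t := lt_trans hy0 ht.1
        obtain ⟨ut, hut, hQt⟩ := mem_image_of_lt_one hX ht0 (hflat t ⟨ht0, ht.2⟩)
        have := hasDerivAt_logF hX hut (hqpos hut).ne'
        rw [hQt] at this
        exact this.differentiableAt.differentiableWithinAt
      obtain ⟨c, hc, hceq⟩ := exists_deriv_eq_slope (fun z => Real.log (distFun ℙ X z))
        hy.2 hcont hdiffOn
      have hc0 : 0 < c := lt_trans hy0 hc.1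
      obtain ⟨uc, huc, hQc⟩ := mem_image_of_lt_one hX hc0 (hflat c ⟨hc0, hc.2⟩)
      have hqc : 0 < quantileDens ℙ X uc := hqpos huc
      have hdc : deriv (fun z => Real.log (distFun ℙ X z)) c
          = uc⁻¹ * (quantileDens ℙ X uc)⁻¹ := by
        rw [← hQc]
        exact (hasDerivAt_logF hX huc hqc.ne').deriv
      -- u1 < uc
      have h1c : u1 < uc := by
        by_contra hcon
        push_neg at hcon
        have := quantile_mono (ℙ := ℙ) hX.meas huc.1 hcon hu1.2
        rw [hQ1, hQc] at this
        linarith [hy.1, hc.1]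
      -- g u1 ≤ g uc gives bound on deriv at c
      have hgle := hg hu1 huc h1c
      have hTc : quantileFun ℙ X uc / (uc * quantileDens ℙ X uc) ≤ C := by
        rw [hCdef]
        unfold gfun at hgle
        have p1 := quantile_pos hX hu1
        have p2 := quantile_pos hX huc
        rw [div_le_div_iff₀ p1 p2] at hgle
        rw [div_le_div_iff₀ (mul_pos huc.1 hqc) (mul_pos hu1.1 hq1)]
        nlinarith [hgle]
      have hderc : deriv (fun z => Real.log (distFun ℙ X z)) c ≤ C / c := by
        rw [hdc, ← hQc, le_div_iff₀ (quantile_pos hX huc)]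
        calc uc⁻¹ * (quantileDens ℙ X uc)⁻¹ * quantileFun ℙ X uc
            = quantileFun ℙ X uc / (uc * quantileDens ℙ X uc) := by
              field_simp
        _ ≤ C := hTc
      -- slope equals deriv at c
      have hslope : slope (fun z => Real.log (distFun ℙ X z)) x2 y
          = deriv (fun z => Real.log (distFun ℙ X z)) c := by
        rw [slope_def_field, hceq]
        rw [← neg_sub (Real.log (distFun ℙ X x2)) (Real.log (distFun ℙ X y)),
          ← neg_sub x2 y, neg_div_neg_eq]
      rw [hslope]
      calc deriv (fun z => Real.log (distFun ℙ X z)) c ≤ C / c := hderc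
      _ ≤ C / y := by
        rw [div_le_div_iff_of_pos_left hCpos hc0 hy0]
        exact hc.1.le
    have hL := le_of_tendsto_of_tendsto h2 htendC hev
    calc x2 * deriv (fun y => Real.log (distFun ℙ X y)) x2 ≤ x2 * (C / x2) :=
      mul_le_mul_of_nonneg_left hL hx2.le
    _ = C := by rw [mul_comm]; exact div_mul_cancel₀ C hx2.ne'
  · rw [deriv_zero_of_not_differentiableAt hdiff, mul_zero]
    exact hCpos.le

lemma antitoneT_of_gmono (hX : MemD ℙ X)
    (hg : ∀ ⦃u1 u2 : ℝ⦄, u1 ∈ Ioo (0:ℝ) 1 → u2 ∈ Ioo (0:ℝ) 1 → u1 < u2 →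
      gfun ℙ X u1 ≤ gfun ℙ X u2) :
    AntitoneOn (fun x => x * deriv (fun y => Real.log (distFun ℙ X y)) x) (Ioi 0) := by
  intro x1 hx1 x2 hx2 h12
  rcases eq_or_lt_of_le h12 with rfl | hlt
  · exact le_rfl
  simp only
  have hx1p : (0:ℝ) < x1 := mem_Ioi.mp hx1
  have hx2p : (0:ℝ) < x2 := mem_Ioi.mp hx2
  have hqpos := qpos_of_gmono hX hg
  rcases lt_or_eq_of_le (distFun_le_one (ℙ := ℙ) (X := X) x2) with hF2 | hF2
  · -- Case A : F x2 < 1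
    obtain ⟨u2, hu2, hQ2⟩ := mem_image_of_lt_one hX hx2p hF2
    have hF1 : distFun ℙ X x1 < 1 := lt_of_le_of_lt (mono_distFun hlt.le) hF2
    obtain ⟨u1, hu1, hQ1⟩ := mem_image_of_lt_one hX hx1p hF1
    have h12u : u1 < u2 := by
      by_contra hcon
      push_neg at hcon
      have := quantile_mono (ℙ := ℙ) hX.meas hu2.1 hcon hu1.2
      rw [hQ1, hQ2] at this
      linarith
    rw [← hQ1, ← hQ2, T_eq hX hu1 (hqpos hu1).ne', T_eq hX hu2 (hqpos hu2).ne']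
    have hgle := hg hu1 hu2 h12u
    unfold gfun at hgle
    have p1 := quantile_pos hX hu1
    have p2 := quantile_pos hX hu2
    have hq1 := hqpos hu1
    have hq2 := hqpos hu2
    rw [div_le_div_iff₀ p1 p2] at hgle
    rw [div_le_div_iff₀ (mul_pos hu2.1 hq2) (mul_pos hu1.1 hq1)]
    nlinarith [hgle]
  · -- Case B : F x2 = 1
    by_cases hflat : ∀ y ∈ Ioo (0:ℝ) x2, distFun ℙ X y < 1
    · exact T_boundary_le hX hg hx1p hlt hflat
    · push_neg at hflat
      obtain ⟨y, hy, hy1⟩ := hflat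
      have hFy : distFun ℙ X y = 1 :=
        le_antisymm (distFun_le_one (ℙ := ℙ) (X := X) y) hy1
      rw [derivLogF_zero_of_flat (ℙ := ℙ) (X := X) hy.1 hy.2 hFy, mul_zero]
      rcases lt_or_eq_of_le (distFun_le_one (ℙ := ℙ) (X := X) x1) with hF1 | hF1
      · obtain ⟨u1, hu1, hQ1⟩ := mem_image_of_lt_one hX hx1p hF1
        rw [← hQ1, T_eq hX hu1 (hqpos hu1).ne']
        exact (div_pos (quantile_pos hX hu1) (mul_pos hu1.1 (hqpos hu1))).le
      · exact T_nonneg_of_F_eq_one (ℙ := ℙ) (X := X) hx1p hF1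

/-- Proposition 5.6.  `X*_v ≤_st X*_w` for all `0 < v < w < 1` iff
`x ↦ x τ(x)` is decreasing on `(0,∞)`, where `τ = (log F)'` is the reversed hazard
rate function of `X`. -/
theorem stmt19 (ℙ : Measure Ω) [IsProbabilityMeasure ℙ] (X : Ω → ℝ)
    (hX : MemD ℙ X) :
    (∀ v w : ℝ, 0 < v → v < w → w < 1 →
      ∀ x ∈ Ioo (0:ℝ) 1,
        quantileFun ℙ X (w * x) / quantileFun ℙ X w
          ≤ quantileFun ℙ X (v * x) / quantileFun ℙ X v)
    ↔ AntitoneOn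
        (fun x => x * deriv (fun y => Real.log (distFun ℙ X y)) x) (Ioi 0) := by
  constructor
  · intro hst
    exact antitoneT_of_gmono hX (gmono_of_st hX hst)
  · intro hT
    exact st_of_gmono hX (gmono_of_antitoneT hX hT)
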